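/- Let Ṫ_i and Ṫ_i^∨ denote the Demazure–Lusztig operators on the group algebra localization Q(X)[y] given by Ṫ_i(e^λ) = −e^λ (1+y)/(1−e^{−α_i}) + e^{s_iλ}(1+y e^{α_i})/(1−e^{−α_i}) and Ṫ_i^∨(e^λ) = −e^λ(1+y)/(1−e^{−α_i}) + e^{s_iλ}(1+y e^{−α_i})/(1−e^{−α_i}). Then for every simple reflection s_i, Ṫ_i = e^ρ ∘ (Ṫ_i^∨|_{y ↦ y^{-1}}) ∘ e^{−ρ} · y, where e^{±ρ} denotes multiplication by e^{±ρ} and ρ is the half-sum of positive roots. Consequently, Ṫ_w = e^ρ (Ṫ_w^∨|_{y↦y^{-1}}) e^{−ρ} y^{ℓ(w)} for all w ∈ W. -/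
import Mathlib


/-- The Demazure–Lusztig operators on the localized group algebra
`F = Frac(ℤ[X])[y]`: for a simple root `α_i`, writing `a i = e^{α_i}`,
`r = e^ρ`, and letting `φ i` be the field automorphism induced by the simple
reflection `s_i` (so `φ i` fixes `y`, and `φ i r = e^{s_i ρ} = r · (a i)⁻¹`
since `s_i ρ = ρ − α_i`), the operators are
`Ṫ_i f = (1 + y e^{α_i})/(1 − e^{−α_i}) · s_i(f) − (1+y)/(1 − e^{−α_i}) · f`
and `Ṫ_i^∨` with `e^{α_i}` replaced by `e^{−α_i}` in the first numerator.
Then `Ṫ_i = e^ρ ∘ (Ṫ_i^∨|_{y ↦ y⁻¹}) ∘ e^{−ρ} · y` for every `i`, and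
consequently `Ṫ_w = e^ρ (Ṫ_w^∨|_{y↦y⁻¹}) e^{−ρ} y^{ℓ(w)}` for all `w ∈ W`
(expressed via words in the simple reflections: `Ṫ_w` is the composition of the
`Ṫ_i` along a reduced word for `w`, of length `ℓ(w)`). -/
theorem stmt_13 {F I : Type*} [Field F] (y r : F) (hy : y ≠ 0) (hr : r ≠ 0)
    (a : I → F) (φ : I → F ≃+* F)
    (ha : ∀ i, a i ≠ 0) (hden : ∀ i, (1 : F) - (a i)⁻¹ ≠ 0)
    (hφy : ∀ i, φ i y = y) (hφr : ∀ i, φ i r = r * (a i)⁻¹) :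
    (∀ (i : I) (f : F),
      ((1 + y * a i) / (1 - (a i)⁻¹) * φ i f - (1 + y) / (1 - (a i)⁻¹) * f)
        = r * ((1 + y⁻¹ * (a i)⁻¹) / (1 - (a i)⁻¹) * φ i (r⁻¹ * f)
            - (1 + y⁻¹) / (1 - (a i)⁻¹) * (r⁻¹ * f)) * y) ∧
    (∀ (ws : List I) (f : F),
      (ws.map (fun i (f : F) =>
          (1 + y * a i) / (1 - (a i)⁻¹) * φ i f
            - (1 + y) / (1 - (a i)⁻¹) * f)).foldr (· ∘ ·) id f
        = r * ((ws.map (fun i (f : F) =>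
            (1 + y⁻¹ * (a i)⁻¹) / (1 - (a i)⁻¹) * φ i f
              - (1 + y⁻¹) / (1 - (a i)⁻¹) * f)).foldr (· ∘ ·) id) (r⁻¹ * f)
          * y ^ ws.length) := by
  have key : ∀ (i : I) (f : F),
      ((1 + y * a i) / (1 - (a i)⁻¹) * φ i f - (1 + y) / (1 - (a i)⁻¹) * f)
        = r * ((1 + y⁻¹ * (a i)⁻¹) / (1 - (a i)⁻¹) * φ i (r⁻¹ * f)
            - (1 + y⁻¹) / (1 - (a i)⁻¹) * (r⁻¹ * f)) * y := by
    intro i f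
    have hri : φ i r⁻¹ = r⁻¹ * a i := by
      rw [map_inv₀, hφr, mul_inv, inv_inv]
    rw [map_mul, hri]
    have e1 : (1 + y⁻¹ * (a i)⁻¹) * a i * y = 1 + y * a i := by
      linear_combination (a i * (a i)⁻¹) * mul_inv_cancel₀ hy
        + mul_inv_cancel₀ (ha i)
    have e2 : (1 + y⁻¹) * y = 1 + y := by
      linear_combination mul_inv_cancel₀ hy
    have h : r * ((1 + y⁻¹ * (a i)⁻¹) / (1 - (a i)⁻¹) * (r⁻¹ * a i * φ i f)
            - (1 + y⁻¹) / (1 - (a i)⁻¹) * (r⁻¹ * f)) * y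
        = (r * r⁻¹) * (((1 + y⁻¹ * (a i)⁻¹) * a i * y) / (1 - (a i)⁻¹) * φ i f
            - ((1 + y⁻¹) * y) / (1 - (a i)⁻¹) * f) := by ring
    rw [h, e1, e2, mul_inv_cancel₀ hr, one_mul]
  refine ⟨key, ?_⟩
  -- homogeneity of the dual operator in powers of y
  have hhom : ∀ (i : I) (n : ℕ) (g : F),
      (1 + y⁻¹ * (a i)⁻¹) / (1 - (a i)⁻¹) * φ i (g * y ^ n)
        - (1 + y⁻¹) / (1 - (a i)⁻¹) * (g * y ^ n)
      = ((1 + y⁻¹ * (a i)⁻¹) / (1 - (a i)⁻¹) * φ i g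
          - (1 + y⁻¹) / (1 - (a i)⁻¹) * g) * y ^ n := by
    intro i n g
    have : φ i (y ^ n) = y ^ n := by rw [map_pow, hφy]
    rw [map_mul, this]; ring
  intro ws f
  induction ws generalizing f with
  | nil =>
    simp only [List.map_nil, List.foldr_nil, id_eq, pow_zero, mul_one,
      ← mul_assoc, mul_inv_cancel₀ hr, one_mul, List.length_nil]
  | cons i ws ih =>
    simp only [List.map_cons, List.foldr_cons, Function.comp_apply, List.length_cons]
    rw [key i _, ih f]
    have h1 : r⁻¹ * (r * (List.map (fun i (f : F) =>
            (1 + y⁻¹ * (a i)⁻¹) / (1 - (a i)⁻¹) * φ i f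
              - (1 + y⁻¹) / (1 - (a i)⁻¹) * f) ws).foldr (· ∘ ·) id (r⁻¹ * f)
          * y ^ ws.length)
        = ((List.map (fun i (f : F) =>
            (1 + y⁻¹ * (a i)⁻¹) / (1 - (a i)⁻¹) * φ i f
              - (1 + y⁻¹) / (1 - (a i)⁻¹) * f) ws).foldr (· ∘ ·) id (r⁻¹ * f))
          * y ^ ws.length := by
      rw [← mul_assoc, ← mul_assoc, inv_mul_cancel₀ hr, one_mul]
    rw [h1, hhom]
    ring
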